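/- The bipartite Ramsey number of K_{4,4} is at most 48: for every red-blue coloring of the edges of the complete bipartite graph K_{48,48}, there is a monochromatic copy of K_{4,4} with 4 vertices on each side. -/

import Mathlib

open Finset

namespace BipRamseyAux

/-- number of `s` such that every edge from `s` to `T` has color `b` -/
def cnt (d : Fin 48 → Fin 48 → Bool) (b : Bool) (T : Finset (Fin 48)) : ℕ :=
  (univ.filter fun s => ∀ t ∈ T, d s t = b).card

lemma cnt_le (d : Fin 48 → Fin 48 → Bool) (b : Bool) (T : Finset (Fin 48)) :
    cnt d b T ≤ 48 := by
  classical
  exact le_trans (card_filter_le _ _) (by simp)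

lemma cnt_choose (d : Fin 48 → Fin 48 → Bool) (b : Bool) (k : ℕ) (T : Finset (Fin 48)) :
    (cnt d b T).choose k =
    ∑ U ∈ (univ : Finset (Fin 48)).powersetCard k,
      (if ∀ s ∈ U, ∀ t ∈ T, d s t = b then 1 else 0) := by
  classical
  have h2 : ((univ.filter fun s => ∀ t ∈ T, d s t = b)).powersetCard k
      = (univ.powersetCard k).filter (fun U => ∀ s ∈ U, ∀ t ∈ T, d s t = b) := by
    ext U
    simp only [mem_powersetCard, mem_filter, subset_iff, mem_filter, mem_univ, true_and]
    tauto
  have h1 : (cnt d b T).choose k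
      = (((univ.filter fun s => ∀ t ∈ T, d s t = b)).powersetCard k).card :=
    (card_powersetCard _ _).symm
  rw [h1, h2, card_filter]

lemma key (d : Fin 48 → Fin 48 → Bool) (b : Bool) (k l : ℕ) :
    ∑ T ∈ (univ : Finset (Fin 48)).powersetCard l, (cnt d b T).choose k =
    ∑ U ∈ (univ : Finset (Fin 48)).powersetCard k, (cnt (fun t s => d s t) b U).choose l := by
  simp only [cnt_choose]
  rw [Finset.sum_comm]
  exact sum_congr rfl fun U _ => sum_congr rfl fun T _ =>
    if_congr ⟨fun h t ht s hs => h s hs t ht, fun h s hs t ht => h t ht s hs⟩ rfl rfl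

lemma choose4_lin : ∀ n ≤ 48, 10 * n ≤ n.choose 4 + 45 := by decide

lemma col_ineq : ∀ x < 49,
    383548 + (x.choose 4 + (48 - x).choose 4) ≤ 100 * (x.choose 3 + (48 - x).choose 3)
    ∧ 21252 ≤ x.choose 4 + (48 - x).choose 4 := by decide

lemma small_ineq : ∀ x ≤ 3, ∀ y ≤ 3, 3 * (x.choose 3 + y.choose 3) ≤ x + y := by decide

end BipRamseyAux

open BipRamseyAux

/-- The bipartite Ramsey number of `K_{4,4}` is at most 48: every 2-coloring of the edges of
`K_{48,48}` contains a monochromatic `K_{4,4}` respecting the bipartition. -/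
theorem bipartite_ramsey_K44_le_48 (c : Fin 48 → Fin 48 → Bool) :
    ∃ (S T : Finset (Fin 48)) (b : Bool), S.card = 4 ∧ T.card = 4 ∧
      ∀ s ∈ S, ∀ t ∈ T, c s t = b := by
  classical
  by_contra hcon
  push_neg at hcon
  set c' : Fin 48 → Fin 48 → Bool := fun t s => c s t with hc'
  -- caps: no 4 rows monochromatic on a 4-set of columns
  have cap : ∀ b : Bool, ∀ T : Finset (Fin 48), T.card = 4 → cnt c b T ≤ 3 := by
    intro b T hT
    by_contra h
    push_neg at h
    obtain ⟨S, hS, hScard⟩ := Finset.exists_subset_card_eq (s := univ.filter fun s => ∀ t ∈ T, c s t = b) (n := 4) h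
    obtain ⟨s, hs, t, ht, hne⟩ := hcon S T b hScard hT
    have := hS hs
    simp only [cnt, mem_filter] at this
    exact hne (this.2 t ht)
  have cap' : ∀ b : Bool, ∀ U : Finset (Fin 48), U.card = 4 → cnt c' b U ≤ 3 := by
    intro b U hU
    by_contra h
    push_neg at h
    obtain ⟨S, hS, hScard⟩ := Finset.exists_subset_card_eq (s := univ.filter fun s => ∀ t ∈ U, c' s t = b) (n := 4) h
    obtain ⟨t, ht, s, hs, hne⟩ := hcon U S b hU hScard
    have := hS hs
    simp only [cnt, mem_filter, hc'] at this
    exact hne (this.2 t ht)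
  -- complement identity for singletons
  have compl : ∀ d : Fin 48 → Fin 48 → Bool, ∀ U ∈ (univ : Finset (Fin 48)).powersetCard 1,
      cnt d true U + cnt d false U = 48 := by
    intro d U hU
    obtain ⟨-, hU1⟩ := mem_powersetCard.mp hU
    obtain ⟨j, rfl⟩ := card_eq_one.mp hU1
    have e1 : cnt d true {j} = (univ.filter fun s => d s j = true).card := by
      simp [cnt]
    have e2 : cnt d false {j} = (univ.filter fun s => ¬ (d s j = true)).card := by
      simp [cnt]
    rw [e1, e2, Finset.card_filter_add_card_filter_not]
    simp
  -- the global sums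
  set P1 := (univ : Finset (Fin 48)).powersetCard 1 with hP1
  set P3 := (univ : Finset (Fin 48)).powersetCard 3 with hP3
  set P4 := (univ : Finset (Fin 48)).powersetCard 4 with hP4
  have cardP1 : P1.card = 48 := by rw [hP1, card_powersetCard]; simp
  have cardP3 : P3.card = 17296 := by rw [hP3, card_powersetCard]; simp; rfl
  have cardP4 : P4.card = 194580 := by rw [hP4, card_powersetCard]; simp; rfl
  set A := ∑ T ∈ P4, (cnt c true T + cnt c false T) with hA
  set B := ∑ U ∈ P4, (cnt c' true U + cnt c' false U) with hB
  set Gc := ∑ U ∈ P3, (cnt c' true U + cnt c' false U) with hGc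
  set Gr := ∑ T ∈ P3, (cnt c true T + cnt c false T) with hGr
  set S34 := ∑ U ∈ P3, ((cnt c' true U).choose 4 + (cnt c' false U).choose 4) with hS34
  set S43 := ∑ T ∈ P3, ((cnt c true T).choose 4 + (cnt c false T).choose 4) with hS43
  -- caps on A and B
  have capA : A ≤ 1167480 := by
    have : A ≤ ∑ _T ∈ P4, 6 := by
      apply sum_le_sum
      intro T hT
      have h4 := (mem_powersetCard.mp hT).2
      have := cap true T h4
      have := cap false T h4
      omega
    simpa [cardP4] using this
  have capB : B ≤ 1167480 := by
    have : B ≤ ∑ _U ∈ P4, 6 := by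
      apply sum_le_sum
      intro U hU
      have h4 := (mem_powersetCard.mp hU).2
      have := cap' true U h4
      have := cap' false U h4
      omega
    simpa [cardP4] using this
  -- (3): 3 * S34 ≤ A
  have keyS34 : ∀ b : Bool,
      ∑ U ∈ P3, (cnt c' b U).choose 4 = ∑ T ∈ P4, (cnt c b T).choose 3 := by
    intro b
    rw [hP3, hP4, ← key c b 3 4]
  have ineq3 : 3 * S34 ≤ A := by
    rw [hS34, sum_add_distrib, keyS34 true, keyS34 false, ← sum_add_distrib, Finset.mul_sum]
    apply sum_le_sum
    intro T hT
    have h4 := (mem_powersetCard.mp hT).2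
    have h1 := cap true T h4
    have h2 := cap false T h4
    have := small_ineq _ h1 _ h2
    omega
  have keyS43 : ∀ b : Bool,
      ∑ T ∈ P3, (cnt c b T).choose 4 = ∑ U ∈ P4, (cnt c' b U).choose 3 := by
    intro b
    rw [hP3, hP4, ← key c' b 3 4]
  have ineq3' : 3 * S43 ≤ B := by
    rw [hS43, sum_add_distrib, keyS43 true, keyS43 false, ← sum_add_distrib, Finset.mul_sum]
    apply sum_le_sum
    intro U hU
    have h4 := (mem_powersetCard.mp hU).2
    have h1 := cap' true U h4
    have h2 := cap' false U h4
    have := small_ineq _ h1 _ h2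
    omega
  -- (4): 10 * Gc ≤ S34 + 1556640 and 10 * Gr ≤ S43 + 1556640
  have ineq4 : 10 * Gc ≤ S34 + 1556640 := by
    have h : 10 * Gc ≤ S34 + ∑ _U ∈ P3, 90 := by
      rw [hGc, hS34, Finset.mul_sum, ← sum_add_distrib]
      apply sum_le_sum
      intro U _
      have h1 := choose4_lin _ (cnt_le c' true U)
      have h2 := choose4_lin _ (cnt_le c' false U)
      omega
    simpa [cardP3] using h
  have ineq4' : 10 * Gr ≤ S43 + 1556640 := by
    have h : 10 * Gr ≤ S43 + ∑ _T ∈ P3, 90 := by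
      rw [hGr, hS43, Finset.mul_sum, ← sum_add_distrib]
      apply sum_le_sum
      intro T _
      have h1 := choose4_lin _ (cnt_le c true T)
      have h2 := choose4_lin _ (cnt_le c false T)
      omega
    simpa [cardP3] using h
  -- singleton forms of B, Gc, A, Gr
  have Bform : B = ∑ U ∈ P1, ((cnt c true U).choose 4 + (cnt c false U).choose 4) := by
    rw [hB, sum_add_distrib, sum_add_distrib]
    have e : ∀ b : Bool, ∑ U ∈ P4, cnt c' b U = ∑ U ∈ P1, (cnt c b U).choose 4 := by
      intro b
      have h1 : ∑ U ∈ P4, cnt c' b U = ∑ U ∈ P4, (cnt c' b U).choose 1 := by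
        simp [Nat.choose_one_right]
      rw [h1, hP4, hP1, key c' b 1 4]
    rw [e true, e false]
  have Gcform : Gc = ∑ U ∈ P1, ((cnt c true U).choose 3 + (cnt c false U).choose 3) := by
    rw [hGc, sum_add_distrib, sum_add_distrib]
    have e : ∀ b : Bool, ∑ U ∈ P3, cnt c' b U = ∑ U ∈ P1, (cnt c b U).choose 3 := by
      intro b
      have h1 : ∑ U ∈ P3, cnt c' b U = ∑ U ∈ P3, (cnt c' b U).choose 1 := by
        simp [Nat.choose_one_right]
      rw [h1, hP3, hP1, key c' b 1 3]
    rw [e true, e false]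
  have Aform : A = ∑ U ∈ P1, ((cnt c' true U).choose 4 + (cnt c' false U).choose 4) := by
    rw [hA, sum_add_distrib, sum_add_distrib]
    have e : ∀ b : Bool, ∑ T ∈ P4, cnt c b T = ∑ U ∈ P1, (cnt c' b U).choose 4 := by
      intro b
      have h1 : ∑ T ∈ P4, cnt c b T = ∑ T ∈ P4, (cnt c b T).choose 1 := by
        simp [Nat.choose_one_right]
      rw [h1, hP4, hP1, key c b 1 4]
    rw [e true, e false]
  have Grform : Gr = ∑ U ∈ P1, ((cnt c' true U).choose 3 + (cnt c' false U).choose 3) := by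
    rw [hGr, sum_add_distrib, sum_add_distrib]
    have e : ∀ b : Bool, ∑ T ∈ P3, cnt c b T = ∑ U ∈ P1, (cnt c' b U).choose 3 := by
      intro b
      have h1 : ∑ T ∈ P3, cnt c b T = ∑ T ∈ P3, (cnt c b T).choose 1 := by
        simp [Nat.choose_one_right]
      rw [h1, hP3, hP1, key c b 1 3]
    rw [e true, e false]
  -- per-singleton inequalities
  have singleton_ineq : ∀ d : Fin 48 → Fin 48 → Bool, ∀ U ∈ P1,
      383548 + ((cnt d true U).choose 4 + (cnt d false U).choose 4)
        ≤ 100 * ((cnt d true U).choose 3 + (cnt d false U).choose 3)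
      ∧ 21252 ≤ (cnt d true U).choose 4 + (cnt d false U).choose 4 := by
    intro d U hU
    have hcomp := compl d U hU
    have hx : cnt d true U < 49 := by omega
    have h := col_ineq (cnt d true U) hx
    have hy : cnt d false U = 48 - cnt d true U := by omega
    rw [hy]
    exact h
  have ineq5 : 18410304 + B ≤ 100 * Gc := by
    have h : ∑ U ∈ P1, (383548 : ℕ) +
        ∑ U ∈ P1, ((cnt c true U).choose 4 + (cnt c false U).choose 4)
        ≤ ∑ U ∈ P1, 100 * ((cnt c true U).choose 3 + (cnt c false U).choose 3) := by
      rw [← sum_add_distrib]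
      apply sum_le_sum
      intro U hU
      exact (singleton_ineq c U hU).1
    rw [Bform, Gcform, Finset.mul_sum]
    simpa [cardP1] using h
  have ineq5' : 18410304 + A ≤ 100 * Gr := by
    have h : ∑ U ∈ P1, (383548 : ℕ) +
        ∑ U ∈ P1, ((cnt c' true U).choose 4 + (cnt c' false U).choose 4)
        ≤ ∑ U ∈ P1, 100 * ((cnt c' true U).choose 3 + (cnt c' false U).choose 3) := by
      rw [← sum_add_distrib]
      apply sum_le_sum
      intro U hU
      exact (singleton_ineq c' U hU).1
    rw [Aform, Grform, Finset.mul_sum]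
    simpa [cardP1] using h
  have ineq6 : 1020096 ≤ B := by
    have h : ∑ U ∈ P1, (21252 : ℕ)
        ≤ ∑ U ∈ P1, ((cnt c true U).choose 4 + (cnt c false U).choose 4) := by
      apply sum_le_sum
      intro U hU
      exact (singleton_ineq c U hU).2
    rw [Bform]
    simpa [cardP1] using h
  omega
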